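/- Let A ∈ ℂ^{N×N} be positive semidefinite Hermitian with rank A = m ≥ 1, let α ∈ (0,1), β = 1 − α, and c > 0, and write a_i = A_{ii} (which are nonnegative reals). Then log₂ det( I_N + (α/β) · (diag{A} + c·I_N)^{-1} · A ) ≤ m · log₂( 1 + (α/(βm)) · Σ_{i=1}^{N} a_i/(a_i + c) ). -/

import Mathlib

open Matrix BigOperators ComplexOrder

-- AM-GM step
lemma amgm_key {ι : Type*} [Fintype ι] [DecidableEq ι] (m : ℕ) (hm : 1 ≤ m) (t : ℝ) (ht : 0 < t)
    (lam : ι → ℝ) (hlam : ∀ i, 0 ≤ lam i)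
    (hcard : Fintype.card {i // lam i ≠ 0} = m) :
    ∏ i, (1 + t * lam i) ≤ (1 + t * (∑ i, lam i) / m) ^ m := by
  classical
  set s : Finset ι := Finset.univ.filter (fun i => lam i ≠ 0) with hs
  have hscard : s.card = m := by
    rw [← hcard, Fintype.card_subtype]
  have hm' : (0:ℝ) < m := by exact_mod_cast hm
  have hsum : ∑ i, lam i = ∑ i ∈ s, lam i := by
    refine (Finset.sum_subset (Finset.subset_univ s) ?_).symm
    intro i _ hi
    simp only [hs, Finset.mem_filter, Finset.mem_univ, true_and, not_not] at hi
    exact hi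
  have hprod : ∏ i, (1 + t * lam i) = ∏ i ∈ s, (1 + t * lam i) := by
    refine (Finset.prod_subset (Finset.subset_univ s) ?_).symm
    intro i _ hi
    simp only [hs, Finset.mem_filter, Finset.mem_univ, true_and, not_not] at hi
    rw [hi]; ring
  have hz : ∀ i ∈ s, (0:ℝ) ≤ 1 + t * lam i := fun i _ => by
    have := hlam i; nlinarith
  have hgm := Real.geom_mean_le_arith_mean_weighted s (fun _ => (m:ℝ)⁻¹)
      (fun i => 1 + t * lam i) (fun i _ => by positivity)
      (by simp [hscard, mul_inv_cancel₀ (ne_of_gt hm')]) hz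
  have hsum2 : ∑ i ∈ s, (m:ℝ)⁻¹ * (1 + t * lam i) = 1 + t * (∑ i, lam i) / m := by
    rw [← Finset.mul_sum, Finset.sum_add_distrib, Finset.sum_const, hscard, hsum,
      ← Finset.mul_sum]
    field_simp
    rw [nsmul_eq_mul, mul_one]
  rw [hsum2] at hgm
  have hpow := pow_le_pow_left₀
    (Finset.prod_nonneg fun i hi => Real.rpow_nonneg (hz i hi) _) hgm m
  rw [← Finset.prod_pow] at hpow
  have heq : ∀ i ∈ s, ((1 + t * lam i) ^ ((m:ℝ)⁻¹)) ^ m = 1 + t * lam i := by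
    intro i hi
    rw [← Real.rpow_natCast ((1 + t * lam i) ^ ((m:ℝ)⁻¹)) m, ← Real.rpow_mul (hz i hi),
      inv_mul_cancel₀ (ne_of_gt hm'), Real.rpow_one]
  rw [Finset.prod_congr rfl heq] at hpow
  rw [hprod]
  exact hpow

theorem stmt8 (N m : ℕ) (hm : 1 ≤ m)
    (A : Matrix (Fin N) (Fin N) ℂ) (hA : A.PosSemidef) (hrank : A.rank = m)
    (α c : ℝ) (hα : α ∈ Set.Ioo (0 : ℝ) 1) (hc : 0 < c) :
    Real.logb 2
        (1 + ((α / (1 - α) : ℝ) : ℂ) •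
            ((Matrix.diagonal A.diag + ((c : ℝ) : ℂ) • 1)⁻¹ * A)).det.re ≤
      m * Real.logb 2
        (1 + α / ((1 - α) * m) * ∑ i, (A i i).re / ((A i i).re + c)) := by
  classical
  obtain ⟨hα0, hα1⟩ := hα
  have hβ : (0:ℝ) < 1 - α := by linarith
  set t : ℝ := α / (1 - α) with ht
  have htpos : 0 < t := div_pos hα0 hβ
  set a : Fin N → ℝ := fun i => (A i i).re with ha
  have hdiagA : ∀ i, A i i = ((a i : ℝ) : ℂ) := fun i => (hA.1.coe_re_apply_self i).symm
  have hann : ∀ i, 0 ≤ a i := by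
    intro i
    have h0 : (0:ℂ) ≤ A i i := by
      exact hA.diag_nonneg
    rw [hdiagA i] at h0
    exact_mod_cast h0
  set d : Fin N → ℝ := fun i => a i + c with hd
  have hdpos : ∀ i, 0 < d i := fun i => add_pos_of_nonneg_of_pos (hann i) hc
  set s : Fin N → ℝ := fun i => (Real.sqrt (d i))⁻¹ with hsdef
  have hspos : ∀ i, 0 < s i := fun i => inv_pos.mpr (Real.sqrt_pos.mpr (hdpos i))
  have hss : ∀ i, s i * s i = (d i)⁻¹ := fun i => by
    simp only [hsdef]
    rw [← mul_inv, Real.mul_self_sqrt (hdpos i).le]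
  set S : Matrix (Fin N) (Fin N) ℂ := Matrix.diagonal (fun i => ((s i : ℝ) : ℂ)) with hS
  have hSdet : IsUnit S.det := by
    rw [hS, Matrix.det_diagonal]
    refine isUnit_iff_ne_zero.mpr (Finset.prod_ne_zero_iff.mpr fun i _ => ?_)
    exact_mod_cast (hspos i).ne'
  have hD : Matrix.diagonal A.diag + ((c:ℝ):ℂ) • 1 = Matrix.diagonal (fun i => ((d i : ℝ):ℂ)) := by
    ext i j
    by_cases h : i = j
    · subst h
      simp [Matrix.diag, hdiagA i, hd]
    · simp [Matrix.diagonal_apply_ne _ h, Matrix.one_apply_ne h]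
  have hDinv : (Matrix.diagonal (fun i => ((d i:ℝ):ℂ)))⁻¹ = S * S := by
    apply Matrix.inv_eq_right_inv
    rw [hS, Matrix.diagonal_mul_diagonal, Matrix.diagonal_mul_diagonal, ← Matrix.diagonal_one]
    refine congrArg Matrix.diagonal (funext fun i => ?_)
    rw [← Complex.ofReal_mul, ← Complex.ofReal_mul, hss i,
      mul_inv_cancel₀ (hdpos i).ne', Complex.ofReal_one]
  set B : Matrix (Fin N) (Fin N) ℂ := S * A * S with hB
  have hSH : Sᴴ = S := by
    rw [hS]
    ext i j
    rw [Matrix.conjTranspose_apply]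
    by_cases h : i = j
    · subst h; simp
    · simp [Matrix.diagonal_apply_ne _ h, Matrix.diagonal_apply_ne _ (Ne.symm h)]
  have hBpsd : B.PosSemidef := by
    have := hA.conjTranspose_mul_mul_same S
    rwa [hSH] at this
  have hBrank : B.rank = m := by
    rw [hB, Matrix.rank_mul_eq_left_of_isUnit_det S (S*A) hSdet,
      Matrix.rank_mul_eq_right_of_isUnit_det S A hSdet, hrank]
  have hH := hBpsd.1
  set lam := hH.eigenvalues with hlam
  have hlnn : ∀ i, 0 ≤ lam i := hBpsd.eigenvalues_nonneg
  have hcard : Fintype.card {i // lam i ≠ 0} = m := by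
    rw [← hH.rank_eq_card_non_zero_eigs, hBrank]
  -- trace identity
  have htr : ∑ i, lam i = ∑ i, a i / d i := by
    have h1 : B.trace = ∑ i, ((lam i : ℝ):ℂ) := by
      conv_lhs => rw [hH.spectral_theorem, Unitary.conjStarAlgAut_apply]
      rw [Matrix.trace_mul_cycle, Matrix.mem_unitaryGroup_iff'.mp hH.eigenvectorUnitary.2,
        one_mul, Matrix.trace_diagonal]
      rfl
    have h2 : B.trace = ∑ i, ((a i / d i : ℝ) : ℂ) := by
      rw [Matrix.trace]
      apply Finset.sum_congr rfl
      intro i _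
      have : B.diag i = ((s i:ℝ):ℂ) * A i i * ((s i:ℝ):ℂ) := by
        rw [hB, hS, Matrix.diag]
        rw [Matrix.mul_diagonal, Matrix.diagonal_mul]
      rw [this, hdiagA i, ← Complex.ofReal_mul, ← Complex.ofReal_mul]
      congr 1
      rw [div_eq_mul_inv, ← hss i]
      ring
    have h3 := h1.symm.trans h2
    exact_mod_cast h3
  -- determinant of 1 + t • B
  have hdetB : (1 + ((t:ℝ):ℂ) • B).det = ((∏ i, (1 + t * lam i) : ℝ) : ℂ) := by
    set U : Matrix (Fin N) (Fin N) ℂ := ↑(hH.eigenvectorUnitary) with hU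
    have hUU : U * star U = 1 := Matrix.mem_unitaryGroup_iff.mp hH.eigenvectorUnitary.2
    have key : 1 + ((t:ℝ):ℂ) • B
        = U * (1 + ((t:ℝ):ℂ) • Matrix.diagonal (RCLike.ofReal ∘ lam)) * star U := by
      rw [Matrix.mul_add, Matrix.add_mul, mul_one, hUU]
      congr 1
      rw [Matrix.mul_smul, Matrix.smul_mul]
      congr 1
      exact hH.spectral_theorem
    rw [key, Matrix.det_mul_right_comm, hUU, one_mul]
    have hdiagsum : (1:Matrix (Fin N) (Fin N) ℂ) + ((t:ℝ):ℂ) • Matrix.diagonal (RCLike.ofReal ∘ lam)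
        = Matrix.diagonal (fun i => ((1 + t * lam i : ℝ):ℂ)) := by
      ext i j
      by_cases h : i = j
      · subst h
        simp [Matrix.one_apply, Function.comp]
      · simp [Matrix.diagonal_apply_ne _ h, Matrix.one_apply_ne h]
    rw [hdiagsum, Matrix.det_diagonal]
    push_cast
    rfl
  -- determinant identity
  have hdet : (1 + ((t:ℝ):ℂ) • ((Matrix.diagonal A.diag + ((c:ℝ):ℂ) • 1)⁻¹ * A)).det
      = (1 + ((t:ℝ):ℂ) • B).det := by
    rw [hD, hDinv, mul_assoc S S A, ← Matrix.mul_smul, Matrix.det_one_add_mul_comm,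
      Matrix.smul_mul, ← hB]
  have hre : (1 + ((t:ℝ):ℂ) • ((Matrix.diagonal A.diag + ((c:ℝ):ℂ) • 1)⁻¹ * A)).det.re
      = ∏ i, (1 + t * lam i) := by
    rw [hdet, hdetB, Complex.ofReal_re]
  rw [hre]
  have hrhs : α / ((1 - α) * m) * ∑ i, (A i i).re / ((A i i).re + c)
      = t * (∑ i, lam i) / m := by
    rw [htr]
    have hsame : ∑ i, (A i i).re / ((A i i).re + c) = ∑ i, a i / d i := rfl
    rw [hsame, ht]
    have hm' : (0:ℝ) < m := by exact_mod_cast hm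
    field_simp
  rw [hrhs]
  have hm' : (0:ℝ) < m := by exact_mod_cast hm
  have hprodpos : (0:ℝ) < ∏ i, (1 + t * lam i) :=
    Finset.prod_pos fun i _ => by nlinarith [hlnn i]
  calc Real.logb 2 (∏ i, (1 + t * lam i))
      ≤ Real.logb 2 ((1 + t * (∑ i, lam i) / m) ^ m) :=
        Real.logb_le_logb_of_le one_lt_two hprodpos
          (amgm_key m hm t htpos lam hlnn hcard)
    _ = m * Real.logb 2 (1 + t * (∑ i, lam i) / m) := Real.logb_pow 2 _ m
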